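/- For ε ∈ (0,1) define u_ε : [−1,1] → ℝ by u_ε(x) = ε^{−3/2}·(x+ε) for x ∈ [−ε,0], u_ε(x) = ε^{−3/2}·(ε−x) for x ∈ [0,ε], and u_ε(x) = 0 otherwise, and set v_ε(x) := ∫_{−1}^x u_ε(t)² dt. Then as ε → 0⁺: (i) for every p ∈ [1,2), ∫_{−1}^1 |u_ε(x)|^p dx = 2·ε^{1−p/2}/(p+1) → 0; (ii) ∫_{−1}^1 |v_ε(x) − (2/3)·χ(x)| dx → 0, where χ is the characteristic function of (0,1]; (iii) ∫_{−1}^1 |v_ε(x)² − (4/9)·χ(x)| dx → 0; (iv) ∫_{−1}^1 |u_ε(x)·v_ε(x)| dx → 0. -/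

import Mathlib

open MeasureTheory Set Filter Topology

/-- The regularizing family `u_ε` approximating (a primitive of) `δ'`:
`u_ε(x) = ε^{−3/2}(x+ε)` on `[−ε,0]`, `u_ε(x) = ε^{−3/2}(ε−x)` on `[0,ε]`, `0` otherwise. -/
noncomputable def uEps (ε x : ℝ) : ℝ :=
  if -ε ≤ x ∧ x ≤ 0 then ε ^ (-(3:ℝ)/2) * (x + ε)
  else if 0 ≤ x ∧ x ≤ ε then ε ^ (-(3:ℝ)/2) * (ε - x)
  else 0

/-- `v_ε(x) = ∫_{−1}^x u_ε(t)² dt`. -/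
noncomputable def vEps (ε x : ℝ) : ℝ := ∫ t in (-1:ℝ)..x, (uEps ε t) ^ 2

/-- The Heaviside-type function: `1` on `(0,1]`, `0` on `[−1,0]`. -/
noncomputable def heaviside (x : ℝ) : ℝ := if 0 < x then 1 else 0

lemma uEps_meas (ε : ℝ) : Measurable (uEps ε) := by
  unfold uEps
  refine Measurable.ite ?_ (by fun_prop) (Measurable.ite ?_ (by fun_prop) (by fun_prop))
  · exact (measurableSet_Icc (a := -ε) (b := (0:ℝ)))
  · exact (measurableSet_Icc (a := (0:ℝ)) (b := ε))

lemma uEps_nonneg {ε : ℝ} (hε : 0 < ε) (x : ℝ) : 0 ≤ uEps ε x := by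
  unfold uEps
  split_ifs with h1 h2
  · exact mul_nonneg (Real.rpow_nonneg hε.le _) (by linarith [h1.1])
  · exact mul_nonneg (Real.rpow_nonneg hε.le _) (by linarith [h2.2])
  · exact le_rfl

lemma uEps_abs_le {ε : ℝ} (hε : 0 < ε) (x : ℝ) :
    |uEps ε x| ≤ ε ^ (-(3:ℝ)/2) * ε := by
  rw [abs_of_nonneg (uEps_nonneg hε x)]
  unfold uEps
  split_ifs with h1 h2
  · exact mul_le_mul_of_nonneg_left (by linarith [h1.2]) (Real.rpow_nonneg hε.le _)
  · exact mul_le_mul_of_nonneg_left (by linarith [h2.1]) (Real.rpow_nonneg hε.le _)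
  · positivity

lemma uEps_zero_left {ε x : ℝ} (hε : 0 < ε) (hx : x ≤ -ε) : uEps ε x = 0 := by
  unfold uEps
  split_ifs with h1 h2
  · have : x = -ε := le_antisymm hx h1.1
    rw [this]; ring
  · exfalso; linarith [h2.1]
  · rfl

lemma uEps_zero_right {ε x : ℝ} (hε : 0 < ε) (hx : ε ≤ x) : uEps ε x = 0 := by
  unfold uEps
  split_ifs with h1 h2
  · exfalso; linarith [h1.2]
  · have : x = ε := le_antisymm h2.2 hx
    rw [this]; ring
  · rfl

lemma intInt_of_bounded {f : ℝ → ℝ} (hm : Measurable f) {C a b : ℝ}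
    (hb : ∀ x ∈ Set.uIcc a b, |f x| ≤ C) : IntervalIntegrable f volume a b := by
  rw [intervalIntegrable_iff']
  refine Integrable.mono' (g := fun _ => C) (integrableOn_const ?_)
    hm.aestronglyMeasurable ?_
  · rw [Set.uIcc]; exact measure_Icc_lt_top.ne
  · exact (ae_restrict_iff' measurableSet_uIcc).2
      (Filter.Eventually.of_forall fun x hx => by simpa [Real.norm_eq_abs] using hb x hx)

lemma usq_intInt {ε : ℝ} (hε : 0 < ε) (a b : ℝ) :
    IntervalIntegrable (fun t => uEps ε t ^ 2) volume a b := by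
  refine intInt_of_bounded ((uEps_meas ε).pow_const 2) (C := (ε ^ (-(3:ℝ)/2) * ε) ^ 2) ?_
  intro x _
  rw [abs_pow]
  exact pow_le_pow_left₀ (abs_nonneg _) (uEps_abs_le hε x) 2

lemma rpow_sq_eq {ε : ℝ} (hε : 0 < ε) : (ε ^ (-(3:ℝ)/2)) ^ 2 = ε ^ (-(3:ℝ)) := by
  rw [← Real.rpow_natCast (ε ^ (-(3:ℝ)/2)) 2, ← Real.rpow_mul hε.le]
  norm_num

lemma eps_cancel {ε : ℝ} (hε : 0 < ε) : ε ^ (-(3:ℝ)) * ε ^ (3:ℕ) = 1 := by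
  rw [← Real.rpow_natCast ε 3, ← Real.rpow_add hε]
  norm_num

lemma int_usq_left {ε : ℝ} (hε : 0 < ε) :
    ∫ t in (-ε)..(0:ℝ), uEps ε t ^ 2 = 1/3 := by
  have h1 : EqOn (fun x => uEps ε x ^ 2)
      (fun x => (ε ^ (-(3:ℝ)/2)) ^ 2 * (x + ε) ^ 2) (Set.uIcc (-ε) 0) := by
    intro x hx
    rw [Set.uIcc_of_le (by linarith : -ε ≤ (0:ℝ))] at hx
    simp only
    unfold uEps
    rw [if_pos ⟨hx.1, hx.2⟩]
    ring
  rw [intervalIntegral.integral_congr h1, intervalIntegral.integral_const_mul]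
  have h2 : (∫ x in (-ε)..(0:ℝ), (x + ε) ^ 2) = ∫ x in (0:ℝ)..ε, x ^ 2 := by
    have := intervalIntegral.integral_comp_add_right (a := -ε) (b := 0) (fun x => x ^ 2) ε
    simpa using this
  rw [h2, integral_pow, rpow_sq_eq hε]
  have := eps_cancel hε
  push_cast
  nlinarith [this]

lemma uEps_on_right {ε x : ℝ} (hε : 0 < ε) (hx : x ∈ Set.Icc (0:ℝ) ε) :
    uEps ε x = ε ^ (-(3:ℝ)/2) * (ε - x) := by
  unfold uEps
  split_ifs with h1 h2
  · have : x = 0 := le_antisymm h1.2 hx.1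
    rw [this]; ring
  · rfl
  · exact absurd ⟨hx.1, hx.2⟩ h2

lemma int_usq_right {ε : ℝ} (hε : 0 < ε) :
    ∫ t in (0:ℝ)..ε, uEps ε t ^ 2 = 1/3 := by
  have h1 : EqOn (fun x => uEps ε x ^ 2)
      (fun x => (ε ^ (-(3:ℝ)/2)) ^ 2 * (ε - x) ^ 2) (Set.uIcc 0 ε) := by
    intro x hx
    rw [Set.uIcc_of_le hε.le] at hx
    simp only
    rw [uEps_on_right hε hx]
    ring
  rw [intervalIntegral.integral_congr h1, intervalIntegral.integral_const_mul]
  have h2 : (∫ x in (0:ℝ)..ε, (ε - x) ^ 2) = ∫ x in (0:ℝ)..ε, x ^ 2 := by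
    have := intervalIntegral.integral_comp_sub_left (a := (0:ℝ)) (b := ε) (fun x => x ^ 2) ε
    simpa using this
  rw [h2, integral_pow, rpow_sq_eq hε]
  have := eps_cancel hε
  push_cast
  nlinarith [this]

lemma int_usq_zero {ε a b : ℝ} (hε : 0 < ε)
    (h : (∀ x ∈ Set.uIcc a b, x ≤ -ε) ∨ (∀ x ∈ Set.uIcc a b, ε ≤ x)) :
    ∫ t in a..b, uEps ε t ^ 2 = 0 := by
  have hEq : EqOn (fun x => uEps ε x ^ 2) (fun _ => (0:ℝ)) (Set.uIcc a b) := by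
    intro x hx
    simp only
    rcases h with h | h
    · rw [uEps_zero_left hε (h x hx)]; ring
    · rw [uEps_zero_right hε (h x hx)]; ring
  rw [intervalIntegral.integral_congr hEq, intervalIntegral.integral_const]
  simp

lemma vEps_zero {ε x : ℝ} (hε : 0 < ε) (hε1 : ε < 1) (hx1 : -1 ≤ x) (hx : x ≤ -ε) :
    vEps ε x = 0 := by
  unfold vEps
  refine int_usq_zero hε (Or.inl ?_)
  intro t ht
  rw [Set.uIcc_of_le (by linarith)] at ht
  exact le_trans ht.2 hx

lemma vEps_eq {ε x : ℝ} (hε : 0 < ε) (hε1 : ε < 1) (hx : ε ≤ x) : vEps ε x = 2/3 := by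
  have i1 : ∫ t in (-1:ℝ)..(-ε), uEps ε t ^ 2 = 0 := by
    refine int_usq_zero hε (Or.inl ?_)
    intro t ht
    rw [Set.uIcc_of_le (by linarith)] at ht
    exact ht.2
  have i4 : ∫ t in ε..x, uEps ε t ^ 2 = 0 := by
    refine int_usq_zero hε (Or.inr ?_)
    intro t ht
    rw [Set.uIcc_of_le hx] at ht
    exact ht.1
  have A := intervalIntegral.integral_add_adjacent_intervals
    (usq_intInt hε (-1) (-ε)) (usq_intInt hε (-ε) 0)
  have B := intervalIntegral.integral_add_adjacent_intervals
    (usq_intInt hε (-1) 0) (usq_intInt hε 0 ε)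
  have C := intervalIntegral.integral_add_adjacent_intervals
    (usq_intInt hε (-1) ε) (usq_intInt hε ε x)
  unfold vEps
  rw [← C, ← B, ← A, i1, i4, int_usq_left hε, int_usq_right hε]
  norm_num

lemma vEps_nonneg {ε x : ℝ} (hx : -1 ≤ x) : 0 ≤ vEps ε x :=
  intervalIntegral.integral_nonneg hx (fun t _ => sq_nonneg _)

lemma vEps_le {ε x : ℝ} (hε : 0 < ε) (hε1 : ε < 1) (hx : x ≤ 1) :
    vEps ε x ≤ 2/3 := by
  have h := intervalIntegral.integral_add_adjacent_intervals
    (usq_intInt hε (-1) x) (usq_intInt hε x 1)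
  have h2 : vEps ε 1 = 2/3 := vEps_eq hε hε1 hε1.le
  have h3 : 0 ≤ ∫ t in x..(1:ℝ), uEps ε t ^ 2 :=
    intervalIntegral.integral_nonneg hx (fun t _ => sq_nonneg _)
  unfold vEps at *
  linarith

lemma vEps_cont {ε : ℝ} (hε : 0 < ε) : Continuous (vEps ε) :=
  intervalIntegral.continuous_primitive (fun a b => usq_intInt hε a b) (-1)

lemma heaviside_meas : Measurable heaviside := by
  unfold heaviside
  exact Measurable.ite measurableSet_Ioi measurable_const measurable_const

lemma heaviside_nonpos {x : ℝ} (hx : x ≤ 0) : heaviside x = 0 := by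
  unfold heaviside; rw [if_neg (not_lt.mpr hx)]

lemma heaviside_pos {x : ℝ} (hx : 0 < x) : heaviside x = 1 := by
  unfold heaviside; rw [if_pos hx]

lemma partI_formula {p ε : ℝ} (hp1 : 1 ≤ p) (hp2 : p < 2) (hε : 0 < ε) (hε1 : ε < 1) :
    (∫ x in (-1:ℝ)..1, |uEps ε x| ^ p) = 2 * ε ^ (1 - p / 2) / (p + 1) := by
  have hp0 : p ≠ 0 := by linarith
  have hmeas : Measurable (fun x => |uEps ε x| ^ p) :=
    (Real.continuous_rpow_const (by linarith)).measurable.comp (uEps_meas ε).abs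
  have hint : ∀ a b : ℝ, IntervalIntegrable (fun x => |uEps ε x| ^ p) volume a b := by
    intro a b
    refine intInt_of_bounded hmeas (C := (ε ^ (-(3:ℝ)/2) * ε) ^ p) ?_
    intro x _
    rw [abs_of_nonneg (Real.rpow_nonneg (abs_nonneg _) p)]
    exact Real.rpow_le_rpow (abs_nonneg _) (uEps_abs_le hε x) (by linarith)
  have e1 : (∫ x in (-1:ℝ)..(-ε), |uEps ε x| ^ p) = 0 := by
    have hEq : EqOn (fun x => |uEps ε x| ^ p) (fun _ => (0:ℝ)) (Set.uIcc (-1) (-ε)) := by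
      intro t ht
      rw [Set.uIcc_of_le (by linarith)] at ht
      simp only
      rw [uEps_zero_left hε ht.2, abs_zero, Real.zero_rpow hp0]
    rw [intervalIntegral.integral_congr hEq, intervalIntegral.integral_const]
    simp
  have e4 : (∫ x in ε..(1:ℝ), |uEps ε x| ^ p) = 0 := by
    have hEq : EqOn (fun x => |uEps ε x| ^ p) (fun _ => (0:ℝ)) (Set.uIcc ε 1) := by
      intro t ht
      rw [Set.uIcc_of_le (by linarith)] at ht
      simp only
      rw [uEps_zero_right hε ht.1, abs_zero, Real.zero_rpow hp0]
    rw [intervalIntegral.integral_congr hEq, intervalIntegral.integral_const]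
    simp
  have int_rp : (∫ x in (0:ℝ)..ε, x ^ p) = ε ^ (p + 1) / (p + 1) := by
    rw [integral_rpow (Or.inl (by linarith))]
    rw [Real.zero_rpow (by linarith : p + 1 ≠ 0)]
    ring
  have e2 : (∫ x in (-ε)..(0:ℝ), |uEps ε x| ^ p)
      = ε ^ (-(3:ℝ)/2 * p) * (ε ^ (p + 1) / (p + 1)) := by
    have hEq : EqOn (fun x => |uEps ε x| ^ p)
        (fun x => ε ^ (-(3:ℝ)/2 * p) * (x + ε) ^ p) (Set.uIcc (-ε) 0) := by
      intro x hx
      rw [Set.uIcc_of_le (by linarith : -ε ≤ (0:ℝ))] at hx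
      simp only
      unfold uEps
      rw [if_pos ⟨hx.1, hx.2⟩]
      rw [abs_of_nonneg (mul_nonneg (Real.rpow_nonneg hε.le _) (by linarith [hx.1]))]
      rw [Real.mul_rpow (Real.rpow_nonneg hε.le _) (by linarith [hx.1]),
        ← Real.rpow_mul hε.le]
    rw [intervalIntegral.integral_congr hEq, intervalIntegral.integral_const_mul]
    have h2 : (∫ x in (-ε)..(0:ℝ), (x + ε) ^ p) = ∫ x in (0:ℝ)..ε, x ^ p := by
      have := intervalIntegral.integral_comp_add_right (a := -ε) (b := 0)
        (fun x => x ^ p) ε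
      simpa using this
    rw [h2, int_rp]
  have e3 : (∫ x in (0:ℝ)..ε, |uEps ε x| ^ p)
      = ε ^ (-(3:ℝ)/2 * p) * (ε ^ (p + 1) / (p + 1)) := by
    have hEq : EqOn (fun x => |uEps ε x| ^ p)
        (fun x => ε ^ (-(3:ℝ)/2 * p) * (ε - x) ^ p) (Set.uIcc 0 ε) := by
      intro x hx
      rw [Set.uIcc_of_le hε.le] at hx
      simp only
      rw [uEps_on_right hε hx]
      rw [abs_of_nonneg (mul_nonneg (Real.rpow_nonneg hε.le _) (by linarith [hx.2]))]
      rw [Real.mul_rpow (Real.rpow_nonneg hε.le _) (by linarith [hx.2]),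
        ← Real.rpow_mul hε.le]
    rw [intervalIntegral.integral_congr hEq, intervalIntegral.integral_const_mul]
    have h2 : (∫ x in (0:ℝ)..ε, (ε - x) ^ p) = ∫ x in (0:ℝ)..ε, x ^ p := by
      have := intervalIntegral.integral_comp_sub_left (a := (0:ℝ)) (b := ε)
        (fun x => x ^ p) ε
      simpa using this
    rw [h2, int_rp]
  have A := intervalIntegral.integral_add_adjacent_intervals (hint (-1) (-ε)) (hint (-ε) 0)
  have B := intervalIntegral.integral_add_adjacent_intervals (hint (-1) 0) (hint 0 ε)
  have C := intervalIntegral.integral_add_adjacent_intervals (hint (-1) ε) (hint ε 1)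
  rw [← C, ← B, ← A, e1, e2, e3, e4]
  have key : ε ^ (-(3:ℝ)/2 * p) * ε ^ (p + 1) = ε ^ (1 - p / 2) := by
    rw [← Real.rpow_add hε]
    ring_nf
  have : ε ^ (-(3:ℝ)/2 * p) * (ε ^ (p + 1) / (p + 1)) = ε ^ (1 - p / 2) / (p + 1) := by
    rw [← key]; ring
  rw [this]
  ring

lemma int_bound {ε : ℝ} (hε : 0 < ε) (hε1 : ε < 1) {h : ℝ → ℝ} (hm : Measurable h)
    {C : ℝ}
    (hbd : ∀ x ∈ Set.Icc (-1:ℝ) 1, |h x| ≤ C)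
    (hz1 : ∀ x ∈ Set.Icc (-1:ℝ) (-ε), h x = 0)
    (hz2 : ∀ x ∈ Set.Icc ε (1:ℝ), h x = 0) :
    (∫ x in (-1:ℝ)..1, h x) ≤ C * (2 * ε) := by
  have hsub : ∀ a b : ℝ, a ∈ Set.Icc (-1:ℝ) 1 → b ∈ Set.Icc (-1:ℝ) 1 →
      Set.uIcc a b ⊆ Set.Icc (-1:ℝ) 1 := by
    intro a b ha hb
    rw [show Set.Icc (-1:ℝ) 1 = Set.uIcc (-1:ℝ) 1 from
      (Set.uIcc_of_le (by norm_num)).symm]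
    exact Set.uIcc_subset_uIcc (by rw [Set.uIcc_of_le (by norm_num)]; exact ha)
      (by rw [Set.uIcc_of_le (by norm_num)]; exact hb)
  have hint : ∀ a b : ℝ, a ∈ Set.Icc (-1:ℝ) 1 → b ∈ Set.Icc (-1:ℝ) 1 →
      IntervalIntegrable h volume a b := by
    intro a b ha hb
    exact intInt_of_bounded hm (fun x hx => hbd x (hsub a b ha hb hx))
  have hmem1 : (-1:ℝ) ∈ Set.Icc (-1:ℝ) 1 := by norm_num
  have hmem2 : (-ε) ∈ Set.Icc (-1:ℝ) 1 := by constructor <;> linarith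
  have hmem3 : ε ∈ Set.Icc (-1:ℝ) 1 := by constructor <;> linarith
  have hmem4 : (1:ℝ) ∈ Set.Icc (-1:ℝ) 1 := by norm_num
  have A := intervalIntegral.integral_add_adjacent_intervals
    (hint (-1) (-ε) hmem1 hmem2) (hint (-ε) ε hmem2 hmem3)
  have B := intervalIntegral.integral_add_adjacent_intervals
    (hint (-1) ε hmem1 hmem3) (hint ε 1 hmem3 hmem4)
  have e1 : (∫ x in (-1:ℝ)..(-ε), h x) = 0 := by
    have hEq : EqOn h (fun _ => (0:ℝ)) (Set.uIcc (-1) (-ε)) := by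
      intro t ht
      rw [Set.uIcc_of_le (by linarith)] at ht
      exact hz1 t ht
    rw [intervalIntegral.integral_congr hEq, intervalIntegral.integral_const]
    simp
  have e3 : (∫ x in ε..(1:ℝ), h x) = 0 := by
    have hEq : EqOn h (fun _ => (0:ℝ)) (Set.uIcc ε 1) := by
      intro t ht
      rw [Set.uIcc_of_le (by linarith)] at ht
      exact hz2 t ht
    rw [intervalIntegral.integral_congr hEq, intervalIntegral.integral_const]
    simp
  have e2 : (∫ x in (-ε)..ε, h x) ≤ (ε - (-ε)) • C := by
    rw [← intervalIntegral.integral_const]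
    refine intervalIntegral.integral_mono_on (by linarith)
      (hint (-ε) ε hmem2 hmem3) intervalIntegrable_const ?_
    intro x hx
    have hx1 : x ∈ Set.Icc (-1:ℝ) 1 := ⟨by linarith [hx.1], by linarith [hx.2]⟩
    exact le_trans (le_abs_self _) (hbd x hx1)
  rw [← B, ← A, e1, e3]
  simp only [smul_eq_mul] at e2
  linarith

lemma rpow_tendsto_zero {q : ℝ} (hq : 0 < q) :
    Tendsto (fun ε : ℝ => ε ^ q) (𝓝[>] 0) (𝓝 0) := by
  have h := (Real.continuousAt_rpow_const 0 q (Or.inr hq.le)).tendsto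
  rw [Real.zero_rpow hq.ne'] at h
  exact h.mono_left nhdsWithin_le_nhds

lemma ev_Ioo : ∀ᶠ ε in 𝓝[>] (0:ℝ), ε ∈ Set.Ioo (0:ℝ) 1 :=
  Ioo_mem_nhdsGT_of_mem (by norm_num)

/-- **Limits of the `δ'`-regularization** (computations of §1.5): as `ε → 0⁺`,
(i) `∫|u_ε|^p = 2ε^{1−p/2}/(p+1) → 0` for `1 ≤ p < 2`;
(ii) `v_ε → (2/3)χ` in `L¹(−1,1)`;
(iii) `v_ε² → (4/9)χ` in `L¹(−1,1)`;
(iv) `∫|u_ε v_ε| → 0`. -/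
theorem delta_prime_regularization_limits :
    (∀ p : ℝ, 1 ≤ p → p < 2 →
      (∀ ε : ℝ, 0 < ε → ε < 1 →
        (∫ x in (-1:ℝ)..1, |uEps ε x| ^ p) = 2 * ε ^ (1 - p / 2) / (p + 1)) ∧
      Tendsto (fun ε : ℝ => ∫ x in (-1:ℝ)..1, |uEps ε x| ^ p)
        (𝓝[>] 0) (𝓝 0)) ∧
    Tendsto (fun ε : ℝ => ∫ x in (-1:ℝ)..1, |vEps ε x - (2/3) * heaviside x|)
      (𝓝[>] 0) (𝓝 0) ∧
    Tendsto (fun ε : ℝ => ∫ x in (-1:ℝ)..1, |(vEps ε x) ^ 2 - (4/9) * heaviside x|)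
      (𝓝[>] 0) (𝓝 0) ∧
    Tendsto (fun ε : ℝ => ∫ x in (-1:ℝ)..1, |uEps ε x * vEps ε x|)
      (𝓝[>] 0) (𝓝 0) := by
  refine ⟨?_, ?_, ?_, ?_⟩
  · -- part (i)
    intro p hp1 hp2
    refine ⟨fun ε hε hε1 => partI_formula hp1 hp2 hε hε1, ?_⟩
    have hq : 0 < 1 - p / 2 := by linarith
    have t2 : Tendsto (fun ε : ℝ => 2 * ε ^ (1 - p / 2) / (p + 1)) (𝓝[>] 0)
        (𝓝 (2 * 0 / (p + 1))) := ((rpow_tendsto_zero hq).const_mul 2).div_const (p + 1)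
    refine Tendsto.congr' (ev_Ioo.mono fun ε hε => ?_) (by simpa using t2)
    exact (partI_formula hp1 hp2 hε.1 hε.2).symm
  · -- part (ii)
    refine squeeze_zero' (g := fun ε : ℝ => (2/3 : ℝ) * (2 * ε))
      (Filter.Eventually.of_forall fun ε =>
      intervalIntegral.integral_nonneg (by norm_num) fun x _ => abs_nonneg _)
      (ev_Ioo.mono fun ε hε => ?_) ?_
    · refine int_bound hε.1 hε.2 (Measurable.abs ?_) (C := 2/3) ?_ ?_ ?_
      · exact ((vEps_cont hε.1).measurable).sub (heaviside_meas.const_mul _)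
      · intro x hx
        rw [abs_abs]
        rcases le_or_gt x 0 with h0 | h0
        · rw [heaviside_nonpos h0, mul_zero, sub_zero,
            abs_of_nonneg (vEps_nonneg hx.1)]
          exact vEps_le hε.1 hε.2 hx.2
        · rw [heaviside_pos h0, mul_one]
          have h1 := vEps_nonneg (ε := ε) (x := x) hx.1
          have h2 := vEps_le hε.1 hε.2 hx.2
          rw [abs_le]
          constructor <;> linarith
      · intro x hx
        rw [vEps_zero hε.1 hε.2 hx.1 hx.2,
          heaviside_nonpos (by linarith [hx.2, hε.1] : x ≤ 0)]
        norm_num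
      · intro x hx
        rw [vEps_eq hε.1 hε.2 hx.1, heaviside_pos (by linarith [hx.1, hε.1] : 0 < x)]
        norm_num
    · have hc : Continuous fun ε : ℝ => (2/3 : ℝ) * (2 * ε) := by continuity
      have h : Tendsto (fun ε : ℝ => (2/3 : ℝ) * (2 * ε)) (𝓝[>] 0) (𝓝 ((2/3 : ℝ) * (2 * 0))) :=
        (hc.tendsto 0).mono_left nhdsWithin_le_nhds
      simpa using h
  · -- part (iii)
    refine squeeze_zero' (g := fun ε : ℝ => (4/9 : ℝ) * (2 * ε))
      (Filter.Eventually.of_forall fun ε =>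
      intervalIntegral.integral_nonneg (by norm_num) fun x _ => abs_nonneg _)
      (ev_Ioo.mono fun ε hε => ?_) ?_
    · refine int_bound hε.1 hε.2 (Measurable.abs ?_) (C := 4/9) ?_ ?_ ?_
      · exact (((vEps_cont hε.1).pow 2).measurable).sub (heaviside_meas.const_mul _)
      · intro x hx
        rw [abs_abs]
        have h1 := vEps_nonneg (ε := ε) (x := x) hx.1
        have h2 := vEps_le hε.1 hε.2 hx.2
        rcases le_or_gt x 0 with h0 | h0
        · rw [heaviside_nonpos h0, mul_zero, sub_zero, abs_of_nonneg (by positivity)]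
          nlinarith
        · rw [heaviside_pos h0, mul_one, abs_le]
          constructor <;> nlinarith
      · intro x hx
        rw [vEps_zero hε.1 hε.2 hx.1 hx.2,
          heaviside_nonpos (by linarith [hx.2, hε.1] : x ≤ 0)]
        norm_num
      · intro x hx
        rw [vEps_eq hε.1 hε.2 hx.1, heaviside_pos (by linarith [hx.1, hε.1] : 0 < x)]
        norm_num
    · have hc : Continuous fun ε : ℝ => (4/9 : ℝ) * (2 * ε) := by continuity
      have h : Tendsto (fun ε : ℝ => (4/9 : ℝ) * (2 * ε)) (𝓝[>] 0) (𝓝 ((4/9 : ℝ) * (2 * 0))) :=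
        (hc.tendsto 0).mono_left nhdsWithin_le_nhds
      simpa using h
  · -- part (iv)
    refine squeeze_zero' (g := fun ε : ℝ => (4/3 : ℝ) * ε ^ ((1:ℝ)/2))
      (Filter.Eventually.of_forall fun ε =>
      intervalIntegral.integral_nonneg (by norm_num) fun x _ => abs_nonneg _)
      (ev_Ioo.mono fun ε hε => ?_) ?_
    · have hb := int_bound hε.1 hε.2 (h := fun x => |uEps ε x * vEps ε x|)
        (Measurable.abs ((uEps_meas ε).mul (vEps_cont hε.1).measurable))
        (C := ε ^ (-(3:ℝ)/2) * ε * (2/3)) ?_ ?_ ?_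
      · refine le_trans hb (le_of_eq ?_)
        have h2 : ε * ε = ε ^ ((2:ℝ)) := by
          rw [show (2:ℝ) = ((2:ℕ):ℝ) by norm_num, Real.rpow_natCast]; ring
        have h1 : ε ^ (-(3:ℝ)/2) * ε ^ ((2:ℝ)) = ε ^ ((1:ℝ)/2) := by
          rw [← Real.rpow_add hε.1]; norm_num
        calc ε ^ (-(3:ℝ)/2) * ε * (2/3) * (2 * ε)
            = 4/3 * (ε ^ (-(3:ℝ)/2) * (ε * ε)) := by ring
          _ = 4/3 * (ε ^ (-(3:ℝ)/2) * ε ^ ((2:ℝ))) := by rw [h2]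
          _ = 4/3 * ε ^ ((1:ℝ)/2) := by rw [h1]
      · intro x hx
        show |(|uEps ε x * vEps ε x|)| ≤ _
        rw [abs_abs, abs_mul]
        have hv : |vEps ε x| ≤ 2/3 := by
          rw [abs_of_nonneg (vEps_nonneg hx.1)]
          exact vEps_le hε.1 hε.2 hx.2
        exact mul_le_mul (uEps_abs_le hε.1 x) hv (abs_nonneg _)
          (mul_nonneg (Real.rpow_nonneg hε.1.le _) hε.1.le)
      · intro x hx
        show |uEps ε x * vEps ε x| = 0
        rw [uEps_zero_left hε.1 hx.2, zero_mul, abs_zero]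
      · intro x hx
        show |uEps ε x * vEps ε x| = 0
        rw [uEps_zero_right hε.1 hx.1, zero_mul, abs_zero]
    · have := (rpow_tendsto_zero (q := (1:ℝ)/2) (by norm_num)).const_mul (4/3 : ℝ)
      simpa using this
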